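/- Let (X,d) be a complete metric space, let p, L be positive integers, let f_i : X^p → X (i = 1,...,L) be contractions with respect to the maximum metric on X^p with C = max{lip(f_1),...,lip(f_L)} ∈ (0,1), let G(K) = ⋃_{i=1}^{L} f_i(K × ... × K), and let A be the unique nonempty compact set with G(A) = A. Then for every ε ∈ (0,1) and every natural number k with k ≥ log_{1/C}(1/ε), one has h(G^{[k]}(K_0), A) ≤ ε · h(K_0, G(K_0)) / (1 − C) for every nonempty compact K_0 ⊆ X. -/

import Mathlib

open Metric EMetric Set

private lemma gifs_aux_side {X : Type*} [MetricSpace X] {p L : ℕ}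
    (f : Fin L → (Fin p → X) → X) (C : NNReal) (hf : ∀ i, LipschitzWith C (f i))
    {K K' : Set X} (hK' : K'.Nonempty) (hK'c : IsCompact K') :
    ∀ x ∈ ⋃ i, f i '' (Set.univ.pi fun _ : Fin p => K),
      infEdist x (⋃ i, f i '' (Set.univ.pi fun _ : Fin p => K')) ≤
        C * hausdorffEdist K K' := by
  rintro x hx
  simp only [Set.mem_iUnion] at hx
  obtain ⟨i, z, hz, rfl⟩ := hx
  choose y hy hyd using fun j => hK'c.exists_infEdist_eq_edist hK' (z j)
  have hyK' : y ∈ Set.univ.pi fun _ : Fin p => K' := fun j _ => hy j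
  calc infEdist (f i z) (⋃ i, f i '' (Set.univ.pi fun _ : Fin p => K'))
      ≤ infEdist (f i z) (f i '' (Set.univ.pi fun _ : Fin p => K')) :=
        infEdist_anti (Set.subset_iUnion (fun i => f i '' (Set.univ.pi fun _ : Fin p => K')) i)
    _ ≤ edist (f i z) (f i y) := infEdist_le_edist_of_mem ⟨y, hyK', rfl⟩
    _ ≤ C * edist z y := (hf i) z y
    _ ≤ C * hausdorffEdist K K' := by
        gcongr
        rw [edist_pi_def]
        refine Finset.sup_le fun j _ => ?_
        rw [← hyd j]
        exact infEdist_le_hausdorffEdist_of_mem (hz j trivial)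

private lemma gifs_aux_contract {X : Type*} [MetricSpace X] {p L : ℕ}
    (f : Fin L → (Fin p → X) → X) (C : NNReal) (hf : ∀ i, LipschitzWith C (f i))
    {K K' : Set X} (hK : K.Nonempty) (hK' : K'.Nonempty)
    (hKc : IsCompact K) (hK'c : IsCompact K') :
    hausdorffEdist (⋃ i, f i '' (Set.univ.pi fun _ : Fin p => K))
        (⋃ i, f i '' (Set.univ.pi fun _ : Fin p => K')) ≤
      C * hausdorffEdist K K' := by
  refine hausdorffEdist_le_of_infEdist
    (gifs_aux_side f C hf hK' hK'c) (fun x hx => ?_)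
  have := gifs_aux_side f C hf hK hKc x hx
  rwa [show hausdorffEdist K' K = hausdorffEdist K K' from hausdorffEDist_comm] at this

/-- The accuracy criterion for the deterministic algorithm (Section IV.A): if
`k ≥ log_{1/C}(1/ε)` then the `k`-th iterate of the fractal operator approximates the
attractor within `ε · h(K₀, G K₀)/(1-C)`. -/
theorem gifs_deterministic_algorithm_accuracy
    {X : Type*} [MetricSpace X] [CompleteSpace X]
    (p L : ℕ) (hp : 0 < p) (hL : 0 < L)
    (f : Fin L → (Fin p → X) → X)
    (C : NNReal) (hC0 : 0 < C) (hC : C < 1)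
    (hf : ∀ i, LipschitzWith C (f i))
    (G : Set X → Set X)
    (hG : ∀ K, G K = ⋃ i, f i '' (Set.univ.pi fun _ : Fin p => K))
    (A : Set X) (hA : A.Nonempty) (hAc : IsCompact A) (hAfix : G A = A)
    (ε : ℝ) (hε0 : 0 < ε) (hε1 : ε < 1)
    (k : ℕ) (hk : Real.logb (1 / (C : ℝ)) (1 / ε) ≤ (k : ℝ))
    (K₀ : Set X) (hK₀ : K₀.Nonempty) (hK₀c : IsCompact K₀) :
    Metric.hausdorffDist (G^[k] K₀) A ≤
      ε * Metric.hausdorffDist K₀ (G K₀) / (1 - (C : ℝ)) := by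
  have hc0 : (0 : ℝ) < (C : ℝ) := hC0
  have hc1 : (C : ℝ) < 1 := hC
  have h1C : (0 : ℝ) < 1 - (C : ℝ) := by linarith
  -- G preserves nonempty compact
  have hGne : ∀ K : Set X, K.Nonempty → (G K).Nonempty := by
    intro K hK
    rw [hG]
    refine ⟨f ⟨0, hL⟩ (fun _ => hK.some), Set.mem_iUnion.2 ⟨⟨0, hL⟩, ?_⟩⟩
    exact ⟨fun _ => hK.some, fun j _ => hK.some_mem, rfl⟩
  have hGc : ∀ K : Set X, IsCompact K → IsCompact (G K) := by
    intro K hK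
    rw [hG]
    exact isCompact_iUnion fun i =>
      ((isCompact_univ_pi fun _ => hK).image (hf i).continuous)
  -- edist contraction
  have hcontr : ∀ K K' : Set X, K.Nonempty → K'.Nonempty → IsCompact K → IsCompact K' →
      hausdorffEdist (G K) (G K') ≤ C * hausdorffEdist K K' := by
    intro K K' h1 h2 h3 h4
    rw [hG, hG]
    exact gifs_aux_contract f C hf h1 h2 h3 h4
  have hfin : ∀ K K' : Set X, K.Nonempty → K'.Nonempty → IsCompact K → IsCompact K' →
      hausdorffEdist K K' ≠ ⊤ := fun K K' h1 h2 h3 h4 =>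
    hausdorffEdist_ne_top_of_nonempty_of_bounded h1 h2 h3.isBounded h4.isBounded
  -- real-distance contraction
  have hcontrR : ∀ K K' : Set X, K.Nonempty → K'.Nonempty → IsCompact K → IsCompact K' →
      hausdorffDist (G K) (G K') ≤ (C : ℝ) * hausdorffDist K K' := by
    intro K K' h1 h2 h3 h4
    have := hcontr K K' h1 h2 h3 h4
    rw [hausdorffDist, hausdorffDist, ← ENNReal.coe_toReal C, ← ENNReal.toReal_mul]
    exact ENNReal.toReal_mono
      (ENNReal.mul_ne_top ENNReal.coe_ne_top (hfin K K' h1 h2 h3 h4)) this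
  -- iterate facts
  have hiter : ∀ n : ℕ, (G^[n] K₀).Nonempty ∧ IsCompact (G^[n] K₀) ∧
      hausdorffDist (G^[n] K₀) A ≤ (C : ℝ) ^ n * hausdorffDist K₀ A := by
    intro n
    induction n with
    | zero => exact ⟨hK₀, hK₀c, by simp⟩
    | succ n ih =>
      obtain ⟨hne, hcpt, hd⟩ := ih
      refine ⟨?_, ?_, ?_⟩
      · rw [Function.iterate_succ_apply']; exact hGne _ hne
      · rw [Function.iterate_succ_apply']; exact hGc _ hcpt
      · rw [Function.iterate_succ_apply']
        calc hausdorffDist (G (G^[n] K₀)) A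
            = hausdorffDist (G (G^[n] K₀)) (G A) := by rw [hAfix]
          _ ≤ (C : ℝ) * hausdorffDist (G^[n] K₀) A := hcontrR _ _ hne hA hcpt hAc
          _ ≤ (C : ℝ) * ((C : ℝ) ^ n * hausdorffDist K₀ A) := by
              exact mul_le_mul_of_nonneg_left hd hc0.le
          _ = (C : ℝ) ^ (n + 1) * hausdorffDist K₀ A := by ring
  -- bound on hausdorffDist K₀ A
  set D := hausdorffDist K₀ A with hD
  set h₀ := hausdorffDist K₀ (G K₀) with hh₀
  have hGK₀ne := hGne K₀ hK₀
  have hGK₀c := hGc K₀ hK₀c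
  have hDbound : D ≤ h₀ / (1 - (C : ℝ)) := by
    have htri : D ≤ h₀ + hausdorffDist (G K₀) (G A) := by
      have : hausdorffDist K₀ A = hausdorffDist K₀ (G A) := by rw [hAfix]
      rw [hD, this]
      exact hausdorffDist_triangle (hfin K₀ (G K₀) hK₀ hGK₀ne hK₀c hGK₀c)
    have hGA : hausdorffDist (G K₀) (G A) ≤ (C : ℝ) * D :=
      hcontrR K₀ A hK₀ hA hK₀c hAc
    have : D * (1 - (C : ℝ)) ≤ h₀ := by nlinarith
    rw [le_div_iff₀ h1C]
    exact this
  -- C^k ≤ ε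
  have hb : (1 : ℝ) < 1 / (C : ℝ) := (one_lt_div hc0).2 hc1
  have hrp : 1 / ε ≤ (1 / (C : ℝ)) ^ (k : ℝ) :=
    (Real.logb_le_iff_le_rpow hb (by positivity)).1 hk
  have hCk : (C : ℝ) ^ k ≤ ε := by
    rw [Real.rpow_natCast, div_pow, one_pow] at hrp
    have hck : (0 : ℝ) < (C : ℝ) ^ k := by positivity
    rw [div_le_div_iff₀ hε0 hck] at hrp
    nlinarith
  obtain ⟨hkne, hkc, hkd⟩ := hiter k
  have hD0 : 0 ≤ D := hausdorffDist_nonneg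
  calc hausdorffDist (G^[k] K₀) A ≤ (C : ℝ) ^ k * D := hkd
    _ ≤ ε * D := mul_le_mul_of_nonneg_right hCk hD0
    _ ≤ ε * (h₀ / (1 - (C : ℝ))) := mul_le_mul_of_nonneg_left hDbound hε0.le
    _ = ε * h₀ / (1 - (C : ℝ)) := by ring
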